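/- Let K be an abstract simplicial complex on [m]. For every integer p ≥ 0 there is an isomorphism of abelian groups H_p(C_*((D^1,S^0)^K)) ≅ ⊕_{ω⊆[m]} H̃_{p−1}(K_ω), where the sum is over all subsets ω of [m]. -/

import Mathlib

set_option synthInstance.maxHeartbeats 1000000
set_option maxHeartbeats 1000000

structure ASC (m : ℕ) where
  faces : Set (Finset (Fin m))
  empty_mem : ∅ ∈ faces
  down_closed : ∀ {σ τ : Finset (Fin m)}, σ ∈ faces → τ ⊆ σ → τ ∈ faces

def csg {m : ℕ} (i : Fin m) (σ : Finset (Fin m)) : ℤ :=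
  (-1) ^ (σ.filter (fun j => j < i)).card

variable {m : ℕ}

open Classical in
noncomputable def partSub {ι α : Type*} (f : ι → α) (a : α) : Submodule ℤ (ι →₀ ℤ) where
  carrier := {x | ∀ b ∈ x.support, f b = a}
  add_mem' := by
    intro x y hx hy b hb
    rcases Finset.mem_union.1 (Finsupp.support_add hb) with h | h
    · exact hx b h
    · exact hy b h
  zero_mem' := by intro b hb; simp at hb
  smul_mem' := by
    intro c x hx b hb
    exact hx b (Finsupp.support_smul hb)

noncomputable def cyclesAt {ι : Type*} (d : (ι →₀ ℤ) →ₗ[ℤ] (ι →₀ ℤ)) (deg : ι → ℤ)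
    (p : ℤ) : Submodule ℤ (ι →₀ ℤ) :=
  LinearMap.ker d ⊓ partSub deg p

/-- homology in degree `p` of a complex given by an endomorphism `d`
(lowering the grading `deg` by one): cycles of degree `p` modulo boundaries
of chains of degree `p+1`. -/
noncomputable abbrev homAt {ι : Type*} (d : (ι →₀ ℤ) →ₗ[ℤ] (ι →₀ ℤ)) (deg : ι → ℤ)
    (p : ℤ) : Type _ :=
  (cyclesAt d deg p) ⧸
    (Submodule.comap (cyclesAt d deg p).subtype (Submodule.map d (partSub deg (p + 1))))

/-- Index of the cellular basis words `u_σ ε_τ`. -/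
def DSIdx (K : ASC m) : Type :=
  {p : Finset (Fin m) × Finset (Fin m) // p.1 ∈ K.faces ∧ Disjoint p.1 p.2}

abbrev DSChain (K : ASC m) : Type := DSIdx K →₀ ℤ

/-- the boundary `∂(u_σ ε_τ) = ∑_{i ∈ σ} (-1)^{(i,σ)} u_{σ∖i} ε_{τ∪i}` -/
noncomputable def DSbnd (K : ASC m) : DSChain K →ₗ[ℤ] DSChain K :=
  Finsupp.lift (DSChain K) ℤ (DSIdx K) fun b =>
    ∑ i ∈ b.1.1, csg i b.1.1 •
      Finsupp.single (⟨(b.1.1.erase i, insert i b.1.2),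
        ⟨K.down_closed b.2.1 (Finset.erase_subset _ _), by
          refine Finset.disjoint_left.2 fun a ha hb => ?_
          rcases Finset.mem_insert.1 hb with h | h
          · exact (Finset.mem_erase.1 ha).1 h
          · exact (Finset.disjoint_left.1 b.2.2 (Finset.mem_of_mem_erase ha)) h⟩⟩ : DSIdx K)
        (1 : ℤ)

def DSdeg {K : ASC m} (b : DSIdx K) : ℤ := b.1.1.card

/-- basis of the augmented simplicial chain complex of the full subcomplex `K_ω` -/
def AugIdx (K : ASC m) (ω : Finset (Fin m)) : Type :=
  {σ : Finset (Fin m) // σ ∈ K.faces ∧ σ ⊆ ω}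

abbrev AugChain (K : ASC m) (ω : Finset (Fin m)) : Type := AugIdx K ω →₀ ℤ

/-- the boundary `∂σ = ∑_{i ∈ σ} (-1)^{(i,σ)} (σ∖{i})` of the augmented chain complex -/
noncomputable def Augbnd (K : ASC m) (ω : Finset (Fin m)) :
    AugChain K ω →ₗ[ℤ] AugChain K ω :=
  Finsupp.lift (AugChain K ω) ℤ (AugIdx K ω) fun b =>
    ∑ i ∈ b.1, csg i b.1 •
      Finsupp.single (⟨b.1.erase i,
        ⟨K.down_closed b.2.1 (Finset.erase_subset _ _),
         (Finset.erase_subset _ _).trans b.2.2⟩⟩ : AugIdx K ω) (1 : ℤ)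

/-- degree of a simplex in the augmented chain complex is `card σ - 1`. -/
def Augdeg {K : ASC m} {ω : Finset (Fin m)} (b : AugIdx K ω) : ℤ := (b.1.card : ℤ) - 1

/-- reduced simplicial homology of the full subcomplex `K_ω` -/
noncomputable abbrev AugH (K : ASC m) (ω : Finset (Fin m)) (p : ℤ) : Type _ :=
  homAt (Augbnd K ω) Augdeg p


set_option linter.unusedSectionVars false

lemma mem_partSub {ι α : Type*} {f : ι → α} {a : α} {x : ι →₀ ℤ} :
    x ∈ partSub f a ↔ ∀ b, x b ≠ 0 → f b = a := by
  constructor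
  · intro h b hb; exact h b (Finsupp.mem_support_iff.2 hb)
  · intro h b hb; exact h b (Finsupp.mem_support_iff.1 hb)

noncomputable def homAtEquiv {ι κ : Type*} (d : (ι →₀ ℤ) →ₗ[ℤ] (ι →₀ ℤ))
    (d' : (κ →₀ ℤ) →ₗ[ℤ] (κ →₀ ℤ)) (deg : ι → ℤ) (deg' : κ → ℤ) (p p' : ℤ)
    (E : (ι →₀ ℤ) ≃ₗ[ℤ] (κ →₀ ℤ))
    (hd : ∀ x, E (d x) = d' (E x))
    (h1 : (partSub deg p).map (E : (ι →₀ ℤ) →ₗ[ℤ] (κ →₀ ℤ)) = partSub deg' p')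
    (h2 : (partSub deg (p+1)).map (E : (ι →₀ ℤ) →ₗ[ℤ] (κ →₀ ℤ)) = partSub deg' (p'+1)) :
    homAt d deg p ≃+ homAt d' deg' p' := by
  have hker : (LinearMap.ker d).map (E : (ι →₀ ℤ) →ₗ[ℤ] (κ →₀ ℤ)) = LinearMap.ker d' := by
    ext y
    simp only [Submodule.mem_map, LinearMap.mem_ker, LinearEquiv.coe_coe]
    constructor
    · rintro ⟨x, hx, rfl⟩; rw [← hd, hx, map_zero]
    · intro hy
      exact ⟨E.symm y, E.injective (by rw [hd, E.apply_symm_apply, hy, map_zero]),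
        E.apply_symm_apply y⟩
  have hcyc : (cyclesAt d deg p).map (E : (ι →₀ ℤ) →ₗ[ℤ] (κ →₀ ℤ)) = cyclesAt d' deg' p' := by
    unfold cyclesAt
    rw [Submodule.map_inf (E : (ι →₀ ℤ) →ₗ[ℤ] (κ →₀ ℤ)) E.injective, hker, h1]
  let e2 : cyclesAt d deg p ≃ₗ[ℤ] cyclesAt d' deg' p' :=
    (E.submoduleMap (cyclesAt d deg p)).trans (LinearEquiv.ofEq _ _ hcyc)
  have he2 : ∀ x : cyclesAt d deg p, (e2 x : κ →₀ ℤ) = E (x : ι →₀ ℤ) := fun x => rfl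
  refine (Submodule.Quotient.equiv _ _ e2 ?_).toAddEquiv
  ext y
  simp only [Submodule.mem_map, Submodule.mem_comap, Submodule.subtype_apply]
  constructor
  · rintro ⟨x, ⟨z, hz, hdz⟩, rfl⟩
    exact ⟨E z, h2 ▸ Submodule.mem_map_of_mem hz, by rw [← hd, hdz, ← he2]; rfl⟩
  · rintro ⟨w, hw, hdw⟩
    rw [← h2] at hw
    obtain ⟨z, hz, rfl⟩ := hw
    refine ⟨e2.symm y, ⟨z, hz, ?_⟩, e2.apply_symm_apply y⟩
    apply E.injective
    rw [hd]
    simp only [LinearEquiv.coe_coe] at hdw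
    rw [hdw]
    have : (e2.symm y : ι →₀ ℤ) = E.symm (y : κ →₀ ℤ) := rfl
    rw [this, E.apply_symm_apply]

section
variable {ι : Type*} [Fintype ι] [DecidableEq ι] {η : ι → Type*}

noncomputable def sigPi : ((Σ i, η i) →₀ ℤ) ≃ₗ[ℤ] ((i : ι) → (η i →₀ ℤ)) :=
  ((sigmaFinsuppAddEquivDFinsupp :
      ((Σ i, η i) →₀ ℤ) ≃+ Π₀ i, η i →₀ ℤ).trans
    ⟨DFinsupp.equivFunOnFintype, by
      intro f g; funext i; simp [DFinsupp.equivFunOnFintype]⟩).toIntLinearEquiv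

lemma sigPi_apply (x : (Σ i, η i) →₀ ℤ) (i : ι) (j : η i) :
    sigPi x i j = x ⟨i, j⟩ := by
  simp [sigPi, DFinsupp.equivFunOnFintype, sigmaFinsuppAddEquivDFinsupp,
    sigmaFinsuppEquivDFinsupp_apply, Finsupp.split_apply]

lemma sigPi_symm_apply (y : (i : ι) → (η i →₀ ℤ)) (b : Σ i, η i) :
    sigPi.symm y b = y b.1 b.2 := by
  have : sigPi (sigPi.symm y) b.1 b.2 = y b.1 b.2 := by rw [sigPi.apply_symm_apply]
  rwa [sigPi_apply] at this

lemma sigPi_mapDomain (i₀ : ι) (y : η i₀ →₀ ℤ) :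
    sigPi (Finsupp.mapDomain (Sigma.mk i₀) y) = Pi.single i₀ y := by
  funext i
  by_cases h : i = i₀
  · subst h
    ext j
    rw [sigPi_apply, Finsupp.mapDomain_apply sigma_mk_injective, Pi.single_eq_same]
  · rw [Pi.single_eq_of_ne h]
    ext j
    rw [sigPi_apply, Finsupp.mapDomain_notin_range]
    · rfl
    · rintro ⟨a, ha⟩
      exact h (congrArg Sigma.fst ha).symm

lemma mem_partSub_pi (deg : ∀ i, η i → ℤ) (a : ℤ) (x : (Σ i, η i) →₀ ℤ) :
    x ∈ partSub (fun b : Σ i, η i => deg b.1 b.2) a ↔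
      ∀ i, sigPi x i ∈ partSub (deg i) a := by
  simp only [mem_partSub]
  constructor
  · intro h i j hj
    rw [sigPi_apply] at hj
    exact h ⟨i, j⟩ hj
  · intro h b hb
    exact h b.1 b.2 (by rw [sigPi_apply]; exact hb)

lemma sigPi_d (d : ∀ i, (η i →₀ ℤ) →ₗ[ℤ] (η i →₀ ℤ))
    (dS : ((Σ i, η i) →₀ ℤ) →ₗ[ℤ] ((Σ i, η i) →₀ ℤ))
    (hdS : ∀ b : Σ i, η i, dS (Finsupp.single b 1) =
      Finsupp.mapDomain (Sigma.mk b.1) (d b.1 (Finsupp.single b.2 1)))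
    (x : (Σ i, η i) →₀ ℤ) :
    sigPi (dS x) = fun i => d i (sigPi x i) := by
  have : ((sigPi : ((Σ i, η i) →₀ ℤ) ≃ₗ[ℤ] _) : _ →ₗ[ℤ] _) ∘ₗ dS =
      (LinearMap.pi fun i => (d i) ∘ₗ ((LinearMap.proj (R := ℤ) (φ := fun i => η i →₀ ℤ) i) ∘ₗ
        ((sigPi : ((Σ i, η i) →₀ ℤ) ≃ₗ[ℤ] _) : _ →ₗ[ℤ] _))) := by
    apply Finsupp.lhom_ext
    intro b n
    have hn : (Finsupp.single b n : (Σ i, η i) →₀ ℤ) = n • Finsupp.single b 1 := by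
      rw [Finsupp.smul_single, smul_eq_mul, mul_one]
    rw [hn]
    simp only [map_smul, LinearMap.comp_apply, LinearEquiv.coe_coe]
    congr 1
    rw [hdS, sigPi_mapDomain]
    funext i
    simp only [LinearMap.pi_apply, LinearMap.comp_apply, LinearMap.proj_apply,
      LinearEquiv.coe_coe]
    have : sigPi (Finsupp.single b (1:ℤ)) = Pi.single b.1 (Finsupp.single b.2 1) := by
      rw [← Finsupp.mapDomain_single (f := Sigma.mk b.1), sigPi_mapDomain]
    rw [this]
    by_cases h : i = b.1
    · subst h; rw [Pi.single_eq_same, Pi.single_eq_same]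
    · rw [Pi.single_eq_of_ne h, Pi.single_eq_of_ne h, map_zero]
  exact LinearMap.congr_fun this x

noncomputable def homAtSigma (d : ∀ i, (η i →₀ ℤ) →ₗ[ℤ] (η i →₀ ℤ)) (deg : ∀ i, η i → ℤ)
    (p : ℤ) (dS : ((Σ i, η i) →₀ ℤ) →ₗ[ℤ] ((Σ i, η i) →₀ ℤ))
    (hdS : ∀ b : Σ i, η i, dS (Finsupp.single b 1) =
      Finsupp.mapDomain (Sigma.mk b.1) (d b.1 (Finsupp.single b.2 1))) :
    homAt dS (fun b => deg b.1 b.2) p ≃+ ((i : ι) → homAt (d i) (deg i) p) := by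
  have hE := sigPi_d d dS hdS
  have hmem : ∀ x : (Σ i, η i) →₀ ℤ,
      x ∈ cyclesAt dS (fun b => deg b.1 b.2) p ↔
        ∀ i, sigPi x i ∈ cyclesAt (d i) (deg i) p := by
    intro x
    simp only [cyclesAt, Submodule.mem_inf, LinearMap.mem_ker]
    constructor
    · rintro ⟨hk, hp⟩ i
      refine ⟨?_, (mem_partSub_pi deg p x).1 hp i⟩
      have := congrFun (hE x) i
      rw [hk, map_zero] at this
      exact this.symm
    · intro h
      refine ⟨?_, (mem_partSub_pi deg p x).2 fun i => (h i).2⟩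
      apply sigPi.injective
      rw [hE x, map_zero]
      funext i
      exact (h i).1
  let G : cyclesAt dS (fun b => deg b.1 b.2) p ≃ₗ[ℤ]
      ((i : ι) → cyclesAt (d i) (deg i) p) :=
    { toFun := fun x i => ⟨sigPi x.1 i, (hmem x.1).1 x.2 i⟩
      invFun := fun y => ⟨sigPi.symm (fun i => (y i).1), by
        rw [hmem]
        intro i
        rw [sigPi.apply_symm_apply]
        exact (y i).2⟩
      map_add' := by intro a b; funext i; ext; simp
      map_smul' := by intro c a; funext i; ext; simp
      left_inv := by
        intro x; ext
        simp only
        rw [show (fun i => sigPi x.1 i) = sigPi x.1 from rfl, sigPi.symm_apply_apply]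
      right_inv := by
        intro y; funext i; ext
        simp only [sigPi.apply_symm_apply] }
  have hGmap : (Submodule.comap (cyclesAt dS (fun b => deg b.1 b.2) p).subtype
        (Submodule.map dS (partSub (fun b => deg b.1 b.2) (p + 1)))).map
        (G : _ →ₗ[ℤ] _) =
      Submodule.pi Set.univ (fun i => Submodule.comap (cyclesAt (d i) (deg i) p).subtype
        (Submodule.map (d i) (partSub (deg i) (p + 1)))) := by
    ext y
    simp only [Submodule.mem_map, Submodule.mem_comap, Submodule.subtype_apply,
      Submodule.mem_pi, Set.mem_univ, forall_true_left]
    constructor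
    · rintro ⟨x, ⟨z, hz, hdz⟩, rfl⟩
      intro i
      refine ⟨sigPi z i, (mem_partSub_pi deg (p+1) z).1 hz i, ?_⟩
      have : sigPi (dS z) i = sigPi x.1 i := by rw [hdz]
      rw [hE z] at this
      exact this
    · intro h
      choose w hw hdw using h
      refine ⟨G.symm y, ⟨sigPi.symm w, ?_, ?_⟩, G.apply_symm_apply y⟩
      · rw [mem_partSub_pi]
        intro i
        rw [sigPi.apply_symm_apply]
        exact hw i
      · apply sigPi.injective
        rw [hE]
        have h1 : (G.symm y : (Σ i, η i) →₀ ℤ) = sigPi.symm (fun i => (y i).1) := rfl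
        rw [h1, sigPi.apply_symm_apply]
        funext i
        rw [sigPi.apply_symm_apply]
        exact hdw i
  exact ((Submodule.Quotient.equiv _ _ G hGmap).trans
    (Submodule.quotientPi _)).toAddEquiv
end

lemma lift_single_one {X M : Type*} [AddCommMonoid M] [Module ℤ M] (f : X → M) (a : X) :
    (Finsupp.lift M ℤ X f) (Finsupp.single a 1) = f a := by
  simp

lemma augIdx_ext {K : ASC m} {ω ω' : Finset (Fin m)} (σ : AugIdx K ω) (σ' : AugIdx K ω')
    (h : ω = ω') (h2 : σ.1 = σ'.1) : (⟨ω, σ⟩ : Σ ω, AugIdx K ω) = ⟨ω', σ'⟩ := by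
  subst h
  cases Subtype.ext h2
  rfl

lemma er_ins {i : Fin m} {σ τ : Finset (Fin m)} (hi : i ∈ σ) :
    σ.erase i ∪ insert i τ = σ ∪ τ := by
  rw [Finset.union_insert, ← Finset.insert_union, Finset.insert_erase hi]

def sigEquiv (K : ASC m) : DSIdx K ≃ Σ ω : Finset (Fin m), AugIdx K ω where
  toFun b := ⟨b.1.1 ∪ b.1.2, ⟨b.1.1, b.2.1, Finset.subset_union_left⟩⟩
  invFun c := ⟨(c.2.1, c.1 \ c.2.1), c.2.2.1, Finset.disjoint_sdiff⟩
  left_inv b := by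
    apply Subtype.ext
    have : (b.1.1 ∪ b.1.2) \ b.1.1 = b.1.2 := Finset.union_sdiff_cancel_left b.2.2
    rw [Prod.ext_iff]
    exact ⟨rfl, this⟩
  right_inv c := by
    exact augIdx_ext _ _ (Finset.union_sdiff_of_subset c.2.2.2) rfl

lemma partSub_map_domLCongr {ι κ : Type*} (e : ι ≃ κ) (deg : ι → ℤ) (deg' : κ → ℤ)
    (h : ∀ i, deg' (e i) = deg i) (a : ℤ) :
    (partSub deg a).map ((Finsupp.domLCongr e : (ι →₀ ℤ) ≃ₗ[ℤ] (κ →₀ ℤ)) : _ →ₗ[ℤ] _)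
      = partSub deg' a := by
  ext y
  simp only [Submodule.mem_map, LinearEquiv.coe_coe]
  constructor
  · rintro ⟨x, hx, rfl⟩
    rw [mem_partSub]
    intro c hc
    simp only [Finsupp.domLCongr_apply, Finsupp.domCongr_apply, Finsupp.equivMapDomain_apply] at hc
    rw [← e.apply_symm_apply c, h]
    exact mem_partSub.1 hx _ hc
  · intro hy
    refine ⟨(Finsupp.domLCongr e).symm y, ?_, (Finsupp.domLCongr e).apply_symm_apply y⟩
    rw [mem_partSub]
    intro b hb
    have hb' : y (e b) ≠ 0 := by
      simp only [Finsupp.domLCongr_symm, Finsupp.domLCongr_apply, Finsupp.domCongr_apply,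
        Finsupp.equivMapDomain_apply, Equiv.symm_symm] at hb
      exact hb
    rw [← h b]
    exact mem_partSub.1 hy _ hb'

lemma partSub_congr {ι : Type*} {deg deg' : ι → ℤ} {a a' : ℤ}
    (h : ∀ b, deg b = a ↔ deg' b = a') : partSub deg a = partSub deg' a' := by
  ext x
  simp only [mem_partSub]
  exact ⟨fun H b hb => (h b).1 (H b hb), fun H b hb => (h b).2 (H b hb)⟩

/-- the sigma-indexed version of the cellular boundary -/
noncomputable def sigBnd (K : ASC m) :
    ((Σ ω : Finset (Fin m), AugIdx K ω) →₀ ℤ) →ₗ[ℤ]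
      ((Σ ω : Finset (Fin m), AugIdx K ω) →₀ ℤ) :=
  Finsupp.lift _ ℤ _ fun b =>
    Finsupp.lmapDomain ℤ ℤ (Sigma.mk b.1) (Augbnd K b.1 (Finsupp.single b.2 1))

lemma sigBnd_single (K : ASC m) (b : Σ ω : Finset (Fin m), AugIdx K ω) :
    sigBnd K (Finsupp.single b 1) =
      Finsupp.mapDomain (Sigma.mk b.1) (Augbnd K b.1 (Finsupp.single b.2 1)) := by
  rw [sigBnd, lift_single_one, Finsupp.lmapDomain_apply]

lemma hd_main (K : ASC m) (x : DSChain K) :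
    (Finsupp.domLCongr (sigEquiv K) : DSChain K ≃ₗ[ℤ] _) (DSbnd K x) =
      sigBnd K ((Finsupp.domLCongr (sigEquiv K) : DSChain K ≃ₗ[ℤ] _) x) := by
  set E := (Finsupp.domLCongr (sigEquiv K) :
    DSChain K ≃ₗ[ℤ] ((Σ ω : Finset (Fin m), AugIdx K ω) →₀ ℤ))
  have : (E : DSChain K →ₗ[ℤ] _) ∘ₗ DSbnd K = sigBnd K ∘ₗ (E : DSChain K →ₗ[ℤ] _) := by
    apply Finsupp.lhom_ext
    intro b n
    have hn : (Finsupp.single b n : DSChain K) = n • Finsupp.single b 1 := by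
      rw [Finsupp.smul_single, smul_eq_mul, mul_one]
    rw [hn]
    simp only [map_smul, LinearMap.comp_apply, LinearEquiv.coe_coe]
    congr 1
    have hE1 : E (Finsupp.single b 1) = Finsupp.single (sigEquiv K b) 1 := by
      simp [E]
    rw [hE1, DSbnd, lift_single_one, sigBnd, lift_single_one]
    have hAug : Augbnd K (sigEquiv K b).1 (Finsupp.single (sigEquiv K b).2 1) =
        ∑ i ∈ b.1.1, csg i b.1.1 •
          Finsupp.single (⟨b.1.1.erase i,
            ⟨K.down_closed b.2.1 (Finset.erase_subset _ _),
             (Finset.erase_subset _ _).trans (sigEquiv K b).2.2.2⟩⟩ :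
               AugIdx K (sigEquiv K b).1) (1 : ℤ) := by
      rw [Augbnd, lift_single_one]
      rfl
    rw [hAug]
    refine (map_sum _ _ _).trans (Eq.trans ?_ (map_sum _ _ _).symm)
    refine Finset.sum_congr rfl fun i hi => ?_
    erw [map_smul, map_smul, Finsupp.lmapDomain_apply, Finsupp.mapDomain_single]
    simp only [E, Finsupp.domLCongr_apply, Finsupp.domCongr_apply,
      Finsupp.equivMapDomain_single]
    erw [Finsupp.domLCongr_single]
    refine congrArg (fun z : Σ ω : Finset (Fin m), AugIdx K ω => csg i b.1.1 • Finsupp.single z (1:ℤ)) ?_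
    show (⟨(b.1.1.erase i) ∪ insert i b.1.2, _⟩ : Σ ω : Finset (Fin m), AugIdx K ω) = _
    exact augIdx_ext _ _ (er_ins hi) rfl
  exact LinearMap.congr_fun this x

theorem stmt5 (K : ASC m) (p : ℕ) :
    Nonempty ((homAt (DSbnd K) DSdeg (p : ℤ)) ≃+
      (DirectSum (Finset (Fin m)) fun ω => AugH K ω ((p : ℤ) - 1))) := by
  refine ⟨?_⟩
  have step1 : homAt (DSbnd K) DSdeg (p : ℤ) ≃+
      homAt (sigBnd K) (fun b : Σ ω : Finset (Fin m), AugIdx K ω =>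
        ((b.2.1.card : ℤ))) (p : ℤ) := by
    refine homAtEquiv _ _ _ _ _ _ (Finsupp.domLCongr (sigEquiv K)) (hd_main K) ?_ ?_
    · exact partSub_map_domLCongr (sigEquiv K) DSdeg _ (fun i => rfl) _
    · exact partSub_map_domLCongr (sigEquiv K) DSdeg _ (fun i => rfl) _
  have step2 : homAt (sigBnd K) (fun b : Σ ω : Finset (Fin m), AugIdx K ω =>
        ((b.2.1.card : ℤ))) (p : ℤ) ≃+
      ((ω : Finset (Fin m)) → homAt (Augbnd K ω) (fun σ : AugIdx K ω => (σ.1.card : ℤ)) (p : ℤ)) :=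
    homAtSigma (fun ω => Augbnd K ω) (fun ω σ => (σ.1.card : ℤ)) (p : ℤ) (sigBnd K)
      (sigBnd_single K)
  have step3 : ∀ ω : Finset (Fin m),
      homAt (Augbnd K ω) (fun σ : AugIdx K ω => (σ.1.card : ℤ)) (p : ℤ) ≃+
        AugH K ω ((p : ℤ) - 1) := by
    intro ω
    refine homAtEquiv _ _ _ Augdeg (p : ℤ) ((p : ℤ) - 1)
      (LinearEquiv.refl ℤ _) (fun x => rfl) ?_ ?_
    · rw [show ((LinearEquiv.refl ℤ (AugIdx K ω →₀ ℤ)) :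
        (AugIdx K ω →₀ ℤ) →ₗ[ℤ] (AugIdx K ω →₀ ℤ)) = LinearMap.id from rfl, Submodule.map_id]
      exact partSub_congr fun b => by unfold Augdeg; omega
    · rw [show ((LinearEquiv.refl ℤ (AugIdx K ω →₀ ℤ)) :
        (AugIdx K ω →₀ ℤ) →ₗ[ℤ] (AugIdx K ω →₀ ℤ)) = LinearMap.id from rfl, Submodule.map_id]
      exact partSub_congr fun b => by unfold Augdeg; omega
  exact step1.trans (step2.trans ((AddEquiv.piCongrRight step3).trans
    (DirectSum.addEquivProd _).symm))
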